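/- arXiv:1610.06746 — 5 statements merged into one kernel-verified Lean document; each statement's English description precedes it below -/
import Mathlib

section
/- Let A be a symmetric m×m matrix over a linearly ordered field with nonnegative diagonal entries such that A_ii * A_jj ≥ (m-1)² * A_ij² for all pairs i ≠ j. Then A is positive semidefinite. -/
open Matrix

/-- Let `A` be a symmetric `m × m` matrix over a linearly ordered
field with nonnegative diagonal entries such that `A i i * A j j ≥ (m-1)^2 * (A i j)^2`
for all `i ≠ j`.  Then `A` is positive semidefinite, i.e. `xᵀ A x ≥ 0` for all `x`. -/
theorem psd_of_dominant_two_by_two_minors {K : Type*} [Field K] [LinearOrder K] [IsStrictOrderedRing K] {m : ℕ}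
    (A : Matrix (Fin m) (Fin m) K) (hsym : A.IsSymm)
    (hdiag : ∀ i, 0 ≤ A i i)
    (hminor : ∀ i j, i ≠ j → ((m : K) - 1) ^ 2 * (A i j) ^ 2 ≤ A i i * A j j) :
    ∀ x : Fin m → K, 0 ≤ x ⬝ᵥ (A *ᵥ x) := by
  intro x
  have hS : x ⬝ᵥ (A *ᵥ x) = ∑ i, ∑ j, x i * (A i j * x j) := by
    simp [dotProduct, mulVec, Finset.mul_sum]
  rcases Nat.lt_or_ge m 2 with hm | hm
  · have heq : ∀ i j : Fin m, i = j := by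
      intro i j; have := i.isLt; have := j.isLt; omega
    rw [hS]
    apply Finset.sum_nonneg
    intro i _
    apply Finset.sum_nonneg
    intro j _
    rw [← heq i j]
    have := hdiag i
    nlinarith [sq_nonneg (x i)]
  · have hc0 : (0:K) < (m : K) - 1 := by
      have : (2 : K) ≤ (m : K) := by exact_mod_cast Nat.cast_le.mpr hm
      linarith
    obtain ⟨c, hc⟩ : ∃ c : K, c = (m : K) - 1 := ⟨_, rfl⟩
    rw [← hc] at hminor hc0
    have key : ∀ i j : Fin m, i ≠ j →
        0 ≤ A i i * (x i * x i) + A j j * (x j * x j) + 2 * c * (x i * (A i j * x j)) := by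
      intro i j hij
      have h1 := hdiag i
      have h2 := hdiag j
      have h3 := hminor i j hij
      rcases eq_or_lt_of_le h1 with h1' | h1'
      · have hA : c * A i j = 0 := by nlinarith [sq_nonneg (c * A i j)]
        have h4 : c * A i j * (x i * x j) = 0 := by rw [hA]; ring
        nlinarith [mul_nonneg h2 (mul_self_nonneg (x j)), h4]
      · nlinarith [sq_nonneg (A i i * x i + c * (A i j * x j)),
          mul_nonneg (mul_nonneg h1 h2) (mul_self_nonneg (x j)),
          mul_nonneg (sub_nonneg.2 h3) (mul_self_nonneg (x j))]
    have e1 : ∑ i : Fin m, ∑ _j : Fin m, A i i * (x i * x i)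
        = (m : K) * ∑ i, A i i * (x i * x i) := by
      simp only [Finset.sum_const, Finset.card_univ, Fintype.card_fin, nsmul_eq_mul,
        Finset.mul_sum]
    have e2 : ∑ _i : Fin m, ∑ j : Fin m, A j j * (x j * x j)
        = (m : K) * ∑ i, A i i * (x i * x i) := by
      rw [Finset.sum_const, Finset.card_univ, Fintype.card_fin, nsmul_eq_mul]
    have e3 : ∑ i : Fin m, ∑ j : Fin m, 2 * c * (x i * (A i j * x j))
        = 2 * c * ∑ i, ∑ j, x i * (A i j * x j) := by
      simp only [Finset.mul_sum]
    have main : ∑ i, ∑ j ∈ Finset.univ.erase i,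
        (A i i * (x i * x i) + A j j * (x j * x j) + 2 * c * (x i * (A i j * x j)))
        = 2 * c * ∑ i, ∑ j, x i * (A i j * x j) := by
      have h1 : ∀ i : Fin m, ∑ j ∈ Finset.univ.erase i,
          (A i i * (x i * x i) + A j j * (x j * x j) + 2 * c * (x i * (A i j * x j)))
          = (∑ j, (A i i * (x i * x i) + A j j * (x j * x j) + 2 * c * (x i * (A i j * x j))))
            - (A i i * (x i * x i) + A i i * (x i * x i) + 2 * c * (x i * (A i i * x i))) :=
        fun i => Finset.sum_erase_eq_sub (Finset.mem_univ i)
      simp_rw [h1, Finset.sum_sub_distrib, Finset.sum_add_distrib]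
      have h3 : ∑ i : Fin m, 2 * c * (x i * (A i i * x i))
          = 2 * c * ∑ i, A i i * (x i * x i) := by
        rw [Finset.mul_sum]; apply Finset.sum_congr rfl; intro i _; ring
      rw [e1, e2, e3, h3, hc]
      ring
    have hnn : 0 ≤ ∑ i, ∑ j ∈ Finset.univ.erase i,
        (A i i * (x i * x i) + A j j * (x j * x j) + 2 * c * (x i * (A i j * x j))) := by
      apply Finset.sum_nonneg; intro i _
      apply Finset.sum_nonneg; intro j hj
      exact key i j (Ne.symm (Finset.ne_of_mem_erase hj))
    rw [main] at hnn
    rw [hS]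
    have h2c : (0:K) < 2 * c := by linarith
    calc (0:K) = 2 * c * 0 := by ring
    _ ≤ _ := le_of_mul_le_mul_left (by linarith [hnn]) h2c
end

section
/- Let a⁽¹⁾, …, a⁽ᵖ⁾ be vectors in Kⁿ and b ∈ Kᵖ, where K is an ordered field. Suppose that for every sign pattern δ ∈ {+1,−1}ᵖ there exists a point x^δ ∈ Kⁿ such that δ_s(⟨a⁽ˢ⁾, x^δ⟩ − b_s) ≥ 0 for all s ∈ [p]. Then there exists a point y in the convex hull of the points {x^δ} such that ⟨a⁽ˢ⁾, y⟩ = b_s for all s. -/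
set_option maxHeartbeats 1000000

private lemma dot_combo {K : Type*} [Field K] [LinearOrder K] [IsStrictOrderedRing K] {n : ℕ}
    (c u v : Fin n → K) (s t : K) :
    ∑ k, c k * (s • u + t • v) k = s * ∑ k, c k * u k + t * ∑ k, c k * v k := by
  rw [Finset.mul_sum, Finset.mul_sum, ← Finset.sum_add_distrib]
  refine Finset.sum_congr rfl fun k _ => ?_
  simp only [Pi.add_apply, Pi.smul_apply, smul_eq_mul]
  ring

private lemma hyperplane_convex {K : Type*} [Field K] [LinearOrder K] [IsStrictOrderedRing K] {n : ℕ}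
    (c : Fin n → K) (d : K) :
    Convex K {z : Fin n → K | ∑ k, c k * z k = d} := by
  intro x hx y hy s t hs ht hst
  simp only [Set.mem_setOf_eq] at *
  rw [dot_combo, hx, hy]
  calc s * d + t * d = (s + t) * d := by ring
    _ = d := by rw [hst, one_mul]

private lemma aux_zero_in {K : Type*} [Field K] [LinearOrder K] [IsStrictOrderedRing K] {n : ℕ} :
    ∀ (p : ℕ) (a : Fin p → Fin n → K) (b : Fin p → K)
      (X : (Fin p → Bool) → (Fin n → K)),
      (∀ δ : Fin p → Bool, ∀ s : Fin p,
        if δ s then 0 ≤ (∑ k, a s k * X δ k) - b s else (∑ k, a s k * X δ k) - b s ≤ 0) →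
      ∃ y ∈ convexHull K (Set.range X), ∀ s, ∑ k, a s k * y k = b s := by
  intro p
  induction p with
  | zero =>
    intro a b X _
    exact ⟨X (fun _ => true), subset_convexHull K _ ⟨_, rfl⟩, fun s => s.elim0⟩
  | succ p ih =>
    intro a b X hX
    have key : ∀ δ : Fin p → Bool, ∃ t : K, 0 ≤ t ∧ t ≤ 1 ∧
        ∑ k, a (Fin.last p) k *
          (t • X (Fin.snoc δ true) + (1-t) • X (Fin.snoc δ false)) k = b (Fin.last p) := by
      intro δ
      have hp := hX (Fin.snoc δ true) (Fin.last p)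
      have hm := hX (Fin.snoc δ false) (Fin.last p)
      simp only [Fin.snoc_last, if_true, if_false, Bool.false_eq_true] at hp hm
      set Sp := ∑ k, a (Fin.last p) k * X (Fin.snoc δ true) k with hSp
      set Sm := ∑ k, a (Fin.last p) k * X (Fin.snoc δ false) k with hSm
      by_cases h : Sp - Sm = 0
      · refine ⟨1, zero_le_one, le_refl 1, ?_⟩
        rw [dot_combo]
        simp only [sub_self, zero_mul, one_mul, add_zero, ← hSp]
        linarith
      · refine ⟨(b (Fin.last p) - Sm)/(Sp - Sm), ?_, ?_, ?_⟩
        · apply div_nonneg <;> [skip; skip] <;> linarith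
        · rw [div_le_one (by rcases lt_or_gt_of_ne h with h'|h' <;> linarith)]
          linarith
        · rw [dot_combo, ← hSp, ← hSm]
          field_simp
          ring
    choose t ht0 ht1 hteq using key
    set X' : (Fin p → Bool) → Fin n → K :=
      fun δ => t δ • X (Fin.snoc δ true) + (1 - t δ) • X (Fin.snoc δ false) with hX'def
    have hX' : ∀ δ : Fin p → Bool, ∀ s : Fin p,
        if δ s then 0 ≤ (∑ k, a s.castSucc k * X' δ k) - b s.castSucc
        else (∑ k, a s.castSucc k * X' δ k) - b s.castSucc ≤ 0 := by
      intro δ s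
      have hp := hX (Fin.snoc δ true) s.castSucc
      have hm := hX (Fin.snoc δ false) s.castSucc
      simp only [Fin.snoc_castSucc] at hp hm
      have hc : (∑ k, a s.castSucc k * X' δ k)
          = t δ * (∑ k, a s.castSucc k * X (Fin.snoc δ true) k)
            + (1 - t δ) * (∑ k, a s.castSucc k * X (Fin.snoc δ false) k) := dot_combo _ _ _ _ _
      have h1t : 0 ≤ 1 - t δ := by linarith [ht1 δ]
      cases hδ : δ s with
      | true =>
        simp only [hδ, if_true] at hp hm ⊢
        rw [hc]
        nlinarith [mul_nonneg (ht0 δ) hp, mul_nonneg h1t hm]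
      | false =>
        simp only [hδ, if_false, Bool.false_eq_true] at hp hm ⊢
        rw [hc]
        nlinarith [mul_nonpos_of_nonneg_of_nonpos (ht0 δ) hp,
          mul_nonpos_of_nonneg_of_nonpos h1t hm]
    obtain ⟨y, hy, heq⟩ := ih (fun s => a s.castSucc) (fun s => b s.castSucc) X' hX'
    refine ⟨y, ?_, ?_⟩
    · have hsub : convexHull K (Set.range X') ⊆ convexHull K (Set.range X) := by
        apply convexHull_min _ (convex_convexHull K _)
        rintro _ ⟨δ, rfl⟩
        have h1 : X (Fin.snoc δ true) ∈ convexHull K (Set.range X) :=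
          subset_convexHull K _ (Set.mem_range_self _)
        have h2 : X (Fin.snoc δ false) ∈ convexHull K (Set.range X) :=
          subset_convexHull K _ (Set.mem_range_self _)
        exact (convex_convexHull K _) h1 h2 (ht0 δ) (by linarith [ht1 δ]) (by ring)
      exact hsub hy
    · intro s
      refine Fin.lastCases ?_ (fun i => heq i) s
      have hsub : convexHull K (Set.range X') ⊆
          {z : Fin n → K | ∑ k, a (Fin.last p) k * z k = b (Fin.last p)} := by
        apply convexHull_min _ (hyperplane_convex _ _)
        rintro _ ⟨δ, rfl⟩
        exact hteq δ
      exact hsub hy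

/-- Let `a⁽¹⁾, …, a⁽ᵖ⁾ ∈ Kⁿ` and `b ∈ Kᵖ` over an ordered field `K`.
Suppose that for every sign pattern `δ ∈ {+1,-1}ᵖ` (encoded by `δ : Fin p → Bool`,
`true ↔ +1`) there is a point `X δ ∈ Kⁿ` with `δ_s (⟨a⁽ˢ⁾, X δ⟩ - b_s) ≥ 0` for all `s`.
Then some point `y` of the convex hull of the points `X δ` satisfies
`⟨a⁽ˢ⁾, y⟩ = b_s` for all `s`. -/
theorem zero_in_convex_hull_of_sign_patterns {K : Type*} [Field K] [LinearOrder K] [IsStrictOrderedRing K]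
    {n p : ℕ} (a : Fin p → Fin n → K) (b : Fin p → K)
    (X : (Fin p → Bool) → (Fin n → K))
    (hX : ∀ δ : Fin p → Bool, ∀ s : Fin p,
      if δ s then 0 ≤ (∑ k, a s k * X δ k) - b s else (∑ k, a s k * X δ k) - b s ≤ 0) :
    ∃ y ∈ convexHull K (Set.range X), ∀ s, ∑ k, a s k * y k = b s :=
  aux_zero_in p a b X hX
end

section
/- Let K be a real closed field with a valuation val: K → Γ ∪ {−∞}. Then there exists a cross-section, i.e. a group homomorphism csec: Γ → K* (into the multiplicative group) such that val ∘ csec is the identity on Γ. -/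
/-- A real closed field: an ordered field in which every nonnegative element is a
square and every polynomial of odd degree has a root. -/
class IsRealClosedOrderedField (K : Type*) [Field K] [LinearOrder K] [IsStrictOrderedRing K] : Prop where
  exists_sq : ∀ x : K, 0 ≤ x → ∃ y : K, y ^ 2 = x
  exists_root_of_odd : ∀ p : Polynomial K, Odd p.natDegree → ∃ x : K, p.eval x = 0

/-- In a real closed field, every positive element has a positive `n`-th root. -/
theorem IsRealClosedOrderedField.exists_pos_nth_root {K : Type*} [Field K] [LinearOrder K] [IsStrictOrderedRing K] [IsRealClosedOrderedField K] :
    ∀ n : ℕ, n ≠ 0 → ∀ x : K, 0 < x → ∃ y : K, 0 < y ∧ y ^ n = x := by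
  intro n
  induction n using Nat.strong_induction_on with
  | _ n ih =>
    intro hn x hx
    rcases Nat.even_or_odd n with he | ho
    · -- even case: n = 2 * m
      obtain ⟨m, hm⟩ := he
      have hm' : n = 2 * m := by omega
      have hmne : m ≠ 0 := by omega
      have hmlt : m < n := by omega
      obtain ⟨s, hs⟩ := IsRealClosedOrderedField.exists_sq x hx.le
      have hsne : s ≠ 0 := by
        rintro rfl; simp at hs; exact hx.ne' hs.symm
      have habs : |s| ^ 2 = x := by rw [sq_abs]; exact hs
      have habspos : 0 < |s| := abs_pos.mpr hsne
      obtain ⟨t, ht, htm⟩ := ih m hmlt hmne |s| habspos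
      refine ⟨t, ht, ?_⟩
      rw [hm', mul_comm, pow_mul, htm, habs]
    · -- odd case: use a root of X ^ n - C x
      obtain ⟨r, hr⟩ := IsRealClosedOrderedField.exists_root_of_odd (Polynomial.X ^ n - Polynomial.C x)
        (by rwa [Polynomial.natDegree_X_pow_sub_C])
      simp only [Polynomial.eval_sub, Polynomial.eval_pow, Polynomial.eval_X,
        Polynomial.eval_C, sub_eq_zero] at hr
      have hrpos : 0 < r := by
        by_contra h
        push_neg at h
        have : r ^ n ≤ 0 := ho.pow_nonpos h
        rw [hr] at this
        exact absurd hx (not_lt.mpr this)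
      exact ⟨r, hrpos, hr⟩

/-- In a linear ordered additive group, `a + a = b + b → a = b`. -/
theorem add_self_inj_of_linear {Γ : Type*} [AddCommGroup Γ] [LinearOrder Γ] [IsOrderedAddMonoid Γ] {a b : Γ}
    (h : a + a = b + b) : a = b := by
  rcases lt_trichotomy a b with h' | h' | h'
  · exact absurd h (ne_of_lt (add_lt_add h' h'))
  · exact h'
  · exact absurd h (ne_of_gt (add_lt_add h' h'))

/-- A nonzero natural multiple of a nonzero element of a linear ordered additive group
is nonzero. -/
theorem nsmul_ne_zero_of_linear {Γ : Type*} [AddCommGroup Γ] [LinearOrder Γ] [IsOrderedAddMonoid Γ] {n : ℕ} (hn : n ≠ 0)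
    {a : Γ} (ha : a ≠ 0) : n • a ≠ 0 := by
  rcases ha.lt_or_gt with h | h
  · exact (nsmul_neg h hn).ne
  · exact (nsmul_pos h hn).ne'

/-- Let `K` be a real closed field with a (surjective) valuation
`v : K → Γ ∪ {-∞}`.  Then there exists a cross-section, i.e. a group homomorphism
`csec : Γ → K*` (from the additive group `Γ` to the multiplicative group of `K`)
such that `v ∘ csec` is the identity on `Γ`. -/
theorem exists_cross_section_of_realClosed
    {K : Type*} [Field K] [LinearOrder K] [IsStrictOrderedRing K] [IsRealClosedOrderedField K]
    {Γ : Type*} [AddCommGroup Γ] [LinearOrder Γ] [IsOrderedAddMonoid Γ]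
    (v : K → WithBot Γ) (hsurj : Function.Surjective v)
    (hzero : ∀ x : K, v x = ⊥ ↔ x = 0)
    (hmul : ∀ x y : K, v (x * y) = v x + v y)
    (hadd : ∀ x y : K, v (x + y) ≤ max (v x) (v y)) :
    ∃ csec : Γ → K, (∀ γ : Γ, csec γ ≠ 0) ∧
      (∀ γ δ : Γ, csec (γ + δ) = csec γ * csec δ) ∧
      (∀ γ : Γ, v (csec γ) = (γ : WithBot Γ)) := by
  classical
  -- the valuation with values in `Γ` on nonzero elements
  set vΓ : K → Γ := fun x => (v x).unbotD 0 with hvΓ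
  have hcoe : ∀ x : K, x ≠ 0 → (vΓ x : WithBot Γ) = v x := by
    intro x hx
    cases h : v x with
    | bot => exact absurd ((hzero x).mp h) hx
    | coe γ => simp [hvΓ, h]
  have hmulΓ : ∀ x y : K, x ≠ 0 → y ≠ 0 → vΓ (x * y) = vΓ x + vΓ y := by
    intro x y hx hy
    have hxy : x * y ≠ 0 := mul_ne_zero hx hy
    have h := hmul x y
    rw [← hcoe x hx, ← hcoe y hy, ← hcoe _ hxy, ← WithBot.coe_add] at h
    exact WithBot.coe_injective h
  have honeΓ : vΓ (1 : K) = 0 := by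
    have h := hmulΓ 1 1 one_ne_zero one_ne_zero
    rw [mul_one] at h
    exact (left_eq_add.mp h)
  -- the positive elements as a multiplicative group
  set P := { x : K // 0 < x } with hP
  -- the valuation as an additive group hom from `Additive P` to `Γ`
  set w : Additive P →+ Γ :=
    { toFun := fun a => vΓ ((Additive.toMul a : P) : K)
      map_zero' := honeΓ
      map_add' := fun a b =>
        hmulΓ _ _ (Additive.toMul a : P).2.ne' (Additive.toMul b : P).2.ne' } with hwdef
  have hwval : ∀ a : Additive P, w a = vΓ ((Additive.toMul a : P) : K) := fun _ => rfl
  -- surjectivity of `w`, using square roots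
  have hws : ∀ γ : Γ, ∃ a : Additive P, w a = γ := by
    intro γ
    obtain ⟨x, hx⟩ := hsurj (γ : WithBot Γ)
    have hxne : x ≠ 0 := by
      rintro rfl
      rw [(hzero 0).mpr rfl] at hx
      exact WithBot.bot_ne_coe hx
    have hvx : vΓ x = γ := by
      have h := hcoe x hxne
      rw [hx] at h
      exact WithBot.coe_injective h
    have hx2 : 0 < x * x := mul_self_pos.mpr hxne
    obtain ⟨y, hy, hy2⟩ := IsRealClosedOrderedField.exists_pos_nth_root 2 two_ne_zero (x * x) hx2
    rw [pow_two] at hy2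
    have hvyy := hmulΓ y y hy.ne' hy.ne'
    rw [hy2, hmulΓ x x hxne hxne, hvx] at hvyy
    have hvy : vΓ y = γ := add_self_inj_of_linear hvyy.symm
    exact ⟨Additive.ofMul (⟨y, hy⟩ : P), hvy⟩
  -- the kernel of `w` is a divisible group
  set N := w.ker with hN
  haveI hdivN : DivisibleBy ↥N ℕ := by
    apply divisibleByOfSMulRightSurj
    intro n hn a
    obtain ⟨y, hy, hyn⟩ := IsRealClosedOrderedField.exists_pos_nth_root n hn
      (((Additive.toMul a.1 : P) : K)) (Additive.toMul a.1 : P).2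
    set b : Additive P := Additive.ofMul (⟨y, hy⟩ : P) with hbdef
    have hb : n • b = a.1 := by
      apply Additive.toMul.injective
      apply Subtype.ext
      show (y : K) ^ n = _
      exact hyn
    have h1 : n • w b = 0 := by
      rw [← map_nsmul, hb]
      exact a.2
    have hwb : w b = 0 := by
      by_contra h0
      exact nsmul_ne_zero_of_linear hn h0 h1
    exact ⟨⟨b, hwb⟩, Subtype.ext hb⟩
  haveI hdivNZ : DivisibleBy ↥N ℤ := AddGroup.divisibleByIntOfDivisibleByNat ↥N
  -- `N` is an injective abelian group, so the inclusion `N → Additive P` splits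
  obtain ⟨r, hr⟩ := (Module.Baer.of_divisible ↥N).extension_property_addMonoidHom
    N.subtype Subtype.coe_injective (AddMonoidHom.id ↥N)
  have hrid : ∀ k : ↥N, r ((k : Additive P)) = k := fun k => DFunLike.congr_fun hr k
  -- the projection `t a = a - r a` kills the kernel and only depends on `w a`
  set t : Additive P → Additive P := fun a => a - ((r a : ↥N) : Additive P) with htdef
  have hwt : ∀ a : Additive P, w (t a) = w a := by
    intro a
    have h0 : w ((r a : ↥N) : Additive P) = 0 := (r a).2
    simp [htdef, map_sub, h0]
  have htadd : ∀ a b : Additive P, t (a + b) = t a + t b := by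
    intro a b
    simp only [htdef, map_add, AddSubgroup.coe_add]
    abel
  have hteq : ∀ a b : Additive P, w a = w b → t a = t b := by
    intro a b hab
    have hmem : a - b ∈ N := by
      rw [hN, AddMonoidHom.mem_ker, map_sub, hab, sub_self]
    have hrs : ((r a : ↥N) : Additive P) - ((r b : ↥N) : Additive P) = a - b := by
      have h1 : r a - r b = r (a - b) := (map_sub r a b).symm
      have h2 : r (a - b) = ⟨a - b, hmem⟩ := hrid ⟨a - b, hmem⟩
      calc ((r a : ↥N) : Additive P) - ((r b : ↥N) : Additive P)
          = ((r a - r b : ↥N) : Additive P) := by rw [AddSubgroup.coe_sub]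
        _ = ((r (a - b) : ↥N) : Additive P) := by rw [h1]
        _ = a - b := by rw [h2]
    have hzero' : t a - t b = 0 := by
      have : t a - t b = (a - b) - (((r a : ↥N) : Additive P) - ((r b : ↥N) : Additive P)) := by
        simp only [htdef]; abel
      rw [this, hrs, sub_self]
    exact sub_eq_zero.mp hzero'
  -- the section
  choose σ hσ using hws
  set s : Γ → Additive P := fun γ => t (σ γ) with hsdef
  have hwsγ : ∀ γ : Γ, w (s γ) = γ := fun γ => (hwt _).trans (hσ γ)
  have hsadd : ∀ γ δ : Γ, s (γ + δ) = s γ + s δ := by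
    intro γ δ
    have h1 : w (σ (γ + δ)) = w (σ γ + σ δ) := by
      rw [map_add, hσ, hσ, hσ]
    calc s (γ + δ) = t (σ (γ + δ)) := rfl
      _ = t (σ γ + σ δ) := hteq _ _ h1
      _ = t (σ γ) + t (σ δ) := htadd _ _
      _ = s γ + s δ := rfl
  refine ⟨fun γ => ((Additive.toMul (s γ) : P) : K), ?_, ?_, ?_⟩
  · intro γ
    exact (Additive.toMul (s γ) : P).2.ne'
  · intro γ δ
    have h : (Additive.toMul (s (γ + δ)) : P)
        = (Additive.toMul (s γ) : P) * (Additive.toMul (s δ) : P) := by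
      rw [hsadd]
      rfl
    have h2 := congrArg (fun p : P => (p : K)) h
    exact h2
  · intro γ
    have h := hwsγ γ
    rw [hwval] at h
    rw [← hcoe _ (Additive.toMul (s γ) : P).2.ne']
    exact congrArg _ h
end

section
/- Let P be a polynomial over the Puiseux series field K and p⁺, p⁻ the tropical polynomials formed from the valuations of the positive and negative parts of P. If x ∈ K^n_{≥0} satisfies P(x) ≥ 0, then p⁺(val(x)) ≥ p⁻(val(x)). -/
noncomputable section
open scoped Classical

/-- The field of (formal generalized real) Puiseux series, realized as Hahn series
over `ℝ` with exponents in `ℝᵒᵈ`: the support of a series is well-ordered for the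
*reversed* order of `ℝ`, so that each nonzero series has a term of greatest real
exponent (its leading term), the exponents being a strictly decreasing (finite or
unbounded) family of reals. -/
abbrev PS : Type := HahnSeries ℝᵒᵈ ℝ

namespace PS

/-- The leading coefficient of a Puiseux series (`0` for the zero series). -/
def lc (x : PS) : ℝ := x.coeff x.order

/-- The valuation of a Puiseux series: its greatest exponent, with `val 0 = ⊥ = -∞`. -/
def val (x : PS) : WithBot ℝ :=
  if x = 0 then ⊥ else (OrderDual.ofDual x.order : ℝ)

/-- The real-valued valuation (greatest exponent), with junk value `0` at `0`. -/
def valR (x : PS) : ℝ := OrderDual.ofDual x.order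

/-- A Puiseux series is nonnegative when its leading coefficient is nonnegative. -/
def Nonneg (x : PS) : Prop := 0 ≤ lc x

/-- A Puiseux series is positive when its leading coefficient is positive. -/
def Pos (x : PS) : Prop := 0 < lc x

/-- The order of the field of Puiseux series: `x ≤ y` iff `y - x` is nonnegative. -/
def le (x y : PS) : Prop := Nonneg (y - x)

/-- The strict order of the field of Puiseux series. -/
def lt (x y : PS) : Prop := Pos (y - x)

/-- The positive monomial `t^r`. -/
def tpow (r : ℝ) : PS := HahnSeries.single (OrderDual.toDual r) 1

end PS

section Poly

/- A polynomial `P = ∑ i, c i * X^(α i)` over the Puiseux series in `n` variables is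
represented by a finite family of coefficients `c : Fin N → PS` and multi-indices
`α : Fin N → Fin n → ℕ`. -/
variable {n N : ℕ} (c : Fin N → PS) (α : Fin N → Fin n → ℕ)

/-- `P⁺`: the sum of the monomials of `P` with (strictly) positive coefficient,
evaluated at `x`. -/
def Pplus (x : Fin n → PS) : PS :=
  ∑ i ∈ Finset.univ.filter (fun i => PS.Pos (c i)), c i * ∏ k, x k ^ α i k

/-- `P⁻`: minus the sum of the monomials of `P` with negative coefficient,
evaluated at `x`; thus `P = P⁺ - P⁻`. -/
def Pminus (x : Fin n → PS) : PS :=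
  ∑ i ∈ Finset.univ.filter (fun i => PS.Pos (-(c i))), (-(c i)) * ∏ k, x k ^ α i k

/-- The tropical polynomial `p⁺` associated with `P⁺` (coefficients replaced by their
valuations), evaluated tropically (max-plus) at a point of `(ℝ ∪ {-∞})ⁿ`. -/
def tropPlus (y : Fin n → WithBot ℝ) : WithBot ℝ :=
  (Finset.univ.filter (fun i => PS.Pos (c i))).sup
    (fun i => (PS.valR (c i) : WithBot ℝ) + ∑ k, α i k • y k)

/-- The tropical polynomial `p⁻` associated with `P⁻`, evaluated tropically. -/
def tropMinus (y : Fin n → WithBot ℝ) : WithBot ℝ :=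
  (Finset.univ.filter (fun i => PS.Pos (-(c i)))).sup
    (fun i => (PS.valR (-(c i)) : WithBot ℝ) + ∑ k, α i k • y k)

end Poly

namespace PS

lemma lc_zero : lc (0 : PS) = 0 := by simp [lc]

lemma ne_zero_of_pos {x : PS} (hx : Pos x) : x ≠ 0 := by
  intro h; rw [h] at hx; simp [Pos, lc_zero] at hx

lemma pos_of_nonneg_ne {x : PS} (hx : Nonneg x) (h : x ≠ 0) : Pos x :=
  lt_of_le_of_ne hx (Ne.symm (HahnSeries.coeff_order_eq_zero.not.mpr h))

lemma val_eq {x : PS} (h : x ≠ 0) : val x = (valR x : WithBot ℝ) := by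
  simp [val, valR, h]

lemma order_add_eq {x y : PS} (h : (x + y).coeff (min x.order y.order) ≠ 0) :
    (x + y).order = min x.order y.order := by
  have hxy : x + y ≠ 0 := by intro h0; rw [h0] at h; simp at h
  refine le_antisymm (HahnSeries.order_le_of_coeff_ne_zero h) ?_
  by_contra hlt
  push_neg at hlt
  have h1 : (x + y).order < x.order := lt_of_lt_of_le hlt (min_le_left _ _)
  have h2 : (x + y).order < y.order := lt_of_lt_of_le hlt (min_le_right _ _)
  have := HahnSeries.coeff_order_eq_zero.not.mpr hxy
  rw [HahnSeries.coeff_add, HahnSeries.coeff_eq_zero_of_lt_order h1,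
    HahnSeries.coeff_eq_zero_of_lt_order h2] at this
  simp at this

lemma pos_add {x y : PS} (hx : Pos x) (hy : Pos y) :
    Pos (x + y) ∧ (x + y).order = min x.order y.order := by
  have hcoeff : 0 < (x + y).coeff (min x.order y.order) := by
    rcases lt_trichotomy x.order y.order with h | h | h
    · rw [min_eq_left h.le, HahnSeries.coeff_add,
        HahnSeries.coeff_eq_zero_of_lt_order h, add_zero]
      exact hx
    · rw [min_eq_left h.le, HahnSeries.coeff_add]
      have := hy; rw [Pos, lc, ← h] at this
      exact add_pos hx this
    · rw [min_eq_right h.le, HahnSeries.coeff_add,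
        HahnSeries.coeff_eq_zero_of_lt_order h, zero_add]
      exact hy
  have ho := order_add_eq (ne_of_gt hcoeff)
  refine ⟨?_, ho⟩
  rw [Pos, lc, ho]; exact hcoeff

lemma nonneg_zero : Nonneg (0 : PS) := by simp [Nonneg, lc_zero]

lemma val_zero : val (0 : PS) = ⊥ := by simp [val]

lemma val_add {x y : PS} (hx : Nonneg x) (hy : Nonneg y) :
    val (x + y) = max (val x) (val y) := by
  rcases eq_or_ne x 0 with rfl | hx0
  · simp [val_zero]
  rcases eq_or_ne y 0 with rfl | hy0
  · simp [val_zero]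
  have hpx := pos_of_nonneg_ne hx hx0
  have hpy := pos_of_nonneg_ne hy hy0
  obtain ⟨hpos, horder⟩ := pos_add hpx hpy
  rw [val_eq (ne_zero_of_pos hpos), val_eq hx0, val_eq hy0]
  have hvr : valR (x + y) = max (valR x) (valR y) := by
    simp only [valR, horder, ofDual_min]
  rw [hvr, WithBot.coe_max]

lemma nonneg_add {x y : PS} (hx : Nonneg x) (hy : Nonneg y) : Nonneg (x + y) := by
  rcases eq_or_ne x 0 with rfl | hx0
  · simpa using hy
  rcases eq_or_ne y 0 with rfl | hy0
  · simpa using hx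
  exact (pos_add (pos_of_nonneg_ne hx hx0) (pos_of_nonneg_ne hy hy0)).1.le

lemma val_mul (x y : PS) : val (x * y) = val x + val y := by
  rcases eq_or_ne x 0 with rfl | hx0
  · simp [val_zero]
  rcases eq_or_ne y 0 with rfl | hy0
  · simp [val_zero]
  have hxy : x * y ≠ 0 := mul_ne_zero hx0 hy0
  rw [val_eq hxy, val_eq hx0, val_eq hy0, ← WithBot.coe_add]
  congr 1
  simp only [valR, HahnSeries.order_mul hx0 hy0]
  rfl

lemma nonneg_mul {x y : PS} (hx : Nonneg x) (hy : Nonneg y) : Nonneg (x * y) := by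
  rcases eq_or_ne x 0 with rfl | hx0
  · simp [nonneg_zero]
  rcases eq_or_ne y 0 with rfl | hy0
  · simp [nonneg_zero]
  have hx' : 0 ≤ x.leadingCoeff := by rw [HahnSeries.leadingCoeff_eq]; exact hx
  have hy' : 0 ≤ y.leadingCoeff := by rw [HahnSeries.leadingCoeff_eq]; exact hy
  rw [Nonneg, lc, HahnSeries.order_mul hx0 hy0, HahnSeries.coeff_mul_order_add_order]
  exact mul_nonneg hx' hy'

lemma val_one : val (1 : PS) = 0 := by
  rw [val_eq one_ne_zero, valR, HahnSeries.order_one]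
  rfl

lemma nonneg_one : Nonneg (1 : PS) := by
  rw [Nonneg, lc, HahnSeries.order_one]
  simp [HahnSeries.coeff_one]

lemma val_pow (x : PS) (m : ℕ) : val (x ^ m) = m • val x := by
  induction m with
  | zero => simp [val_one]
  | succ m ih => rw [pow_succ, val_mul, ih, succ_nsmul]

lemma nonneg_pow {x : PS} (hx : Nonneg x) (m : ℕ) : Nonneg (x ^ m) := by
  induction m with
  | zero => simpa using nonneg_one
  | succ m ih => rw [pow_succ]; exact nonneg_mul ih hx

lemma nonneg_prod {ι : Type*} (s : Finset ι) (f : ι → PS)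
    (h : ∀ i ∈ s, Nonneg (f i)) : Nonneg (∏ i ∈ s, f i) := by
  induction s using Finset.cons_induction with
  | empty => simpa using nonneg_one
  | cons a s ha ih =>
    rw [Finset.prod_cons]
    exact nonneg_mul (h a (Finset.mem_cons_self a s))
      (ih fun i hi => h i (Finset.mem_cons_of_mem hi))

lemma val_prod {ι : Type*} (s : Finset ι) (f : ι → PS) :
    val (∏ i ∈ s, f i) = ∑ i ∈ s, val (f i) := by
  induction s using Finset.cons_induction with
  | empty => simpa using val_one
  | cons a s ha ih => rw [Finset.prod_cons, Finset.sum_cons, val_mul, ih]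

lemma nonneg_sum {ι : Type*} (s : Finset ι) (f : ι → PS)
    (h : ∀ i ∈ s, Nonneg (f i)) : Nonneg (∑ i ∈ s, f i) := by
  induction s using Finset.cons_induction with
  | empty => simpa using nonneg_zero
  | cons a s ha ih =>
    rw [Finset.sum_cons]
    exact nonneg_add (h a (Finset.mem_cons_self a s))
      (ih fun i hi => h i (Finset.mem_cons_of_mem hi))

lemma val_sum {ι : Type*} (s : Finset ι) (f : ι → PS)
    (h : ∀ i ∈ s, Nonneg (f i)) :
    val (∑ i ∈ s, f i) = s.sup (fun i => val (f i)) := by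
  induction s using Finset.cons_induction with
  | empty => simpa using val_zero
  | cons a s ha ih =>
    rw [Finset.sum_cons, Finset.sup_cons,
      val_add (h a (Finset.mem_cons_self a s))
        (nonneg_sum s f fun i hi => h i (Finset.mem_cons_of_mem hi)),
      ih fun i hi => h i (Finset.mem_cons_of_mem hi)]

end PS

/-- Let `P = P⁺ - P⁻` be a polynomial over the Puiseux series and
`p⁺, p⁻` the tropical polynomials formed from the valuations of its positive and
negative parts.  If `x` is in the nonnegative orthant and `P(x) ≥ 0`, then
`p⁺(val x) ≥ p⁻(val x)`. -/
theorem PS.trop_ge_of_nonneg_eval {n N : ℕ} (c : Fin N → PS) (α : Fin N → Fin n → ℕ)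
    (x : Fin n → PS) (hx : ∀ k, PS.Nonneg (x k))
    (hP : PS.le 0 (Pplus c α x - Pminus c α x)) :
    tropMinus c α (fun k => PS.val (x k)) ≤ tropPlus c α (fun k => PS.val (x k)) := by
  
  classical
  have hterm_nn : ∀ i : Fin N, ∀ d : PS, PS.Nonneg d →
      PS.Nonneg (d * ∏ k, x k ^ α i k) := fun i d hd =>
    PS.nonneg_mul hd (PS.nonneg_prod _ _ fun k _ => PS.nonneg_pow (hx k) _)
  have key : ∀ i : Fin N, ∀ d : PS, PS.Pos d →
      PS.val (d * ∏ k, x k ^ α i k) =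
        (PS.valR d : WithBot ℝ) + ∑ k, (α i k) • PS.val (x k) := by
    intro i d hd
    rw [PS.val_mul, PS.val_eq (PS.ne_zero_of_pos hd), PS.val_prod]
    congr 1
    exact Finset.sum_congr rfl fun k _ => PS.val_pow _ _
  have hBnn : PS.Nonneg (Pminus c α x) :=
    PS.nonneg_sum _ _ fun i hi => hterm_nn i _ ((Finset.mem_filter.mp hi).2.le)
  have hBval : PS.val (Pminus c α x) = tropMinus c α (fun k => PS.val (x k)) := by
    rw [Pminus, PS.val_sum _ _ (fun i hi => hterm_nn i _ ((Finset.mem_filter.mp hi).2.le))]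
    exact Finset.sup_congr rfl fun i hi => key i _ ((Finset.mem_filter.mp hi).2)
  have hAval : PS.val (Pplus c α x) = tropPlus c α (fun k => PS.val (x k)) := by
    rw [Pplus, PS.val_sum _ _ (fun i hi => hterm_nn i _ ((Finset.mem_filter.mp hi).2.le))]
    exact Finset.sup_congr rfl fun i hi => key i _ ((Finset.mem_filter.mp hi).2)
  have hdiff : PS.Nonneg (Pplus c α x - Pminus c α x) := by
    have h := hP
    simp only [PS.le, sub_zero] at h
    exact h
  rw [← hAval, ← hBval]
  calc PS.val (Pminus c α x)
      ≤ max (PS.val (Pminus c α x)) (PS.val (Pplus c α x - Pminus c α x)) :=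
        le_max_left _ _
    _ = PS.val (Pminus c α x + (Pplus c α x - Pminus c α x)) :=
        (PS.val_add hBnn hdiff).symm
    _ = PS.val (Pplus c α x) := by congr 1; ring
end
end

section
/- Conversely to tropicalization: let P be a polynomial over Puiseux series, p⁺, p⁻ as above, and y ∈ ℝⁿ a point with p⁺(y) > p⁻(y). Then for the monomial lift x with x_k = t^{y_k}, we have P(x) > 0. -/
noncomputable section
open scoped Classical

open HahnSeries Finset

lemma tpow_pow (r : ℝ) (m : ℕ) : PS.tpow r ^ m = PS.tpow (m • r) := by
  simp [PS.tpow, single_pow]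

lemma prod_tpow {ι : Type*} (s : Finset ι) (f : ι → ℝ) :
    ∏ i ∈ s, PS.tpow (f i) = PS.tpow (∑ i ∈ s, f i) := by
  induction s using Finset.cons_induction with
  | empty => simp [PS.tpow, single_zero_one]
  | cons i s hi ih =>
      rw [Finset.prod_cons, ih, Finset.sum_cons, PS.tpow, PS.tpow, PS.tpow, single_mul_single,
        one_mul]
      rfl

lemma mul_tpow_coeff (x : PS) (e g : ℝ) :
    (x * PS.tpow e).coeff (OrderDual.toDual (g + e)) = x.coeff (OrderDual.toDual g) := by
  have h : OrderDual.toDual (g + e) = OrderDual.toDual g + OrderDual.toDual e := rfl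
  rw [PS.tpow, h, HahnSeries.coeff_mul_single_add, mul_one]

lemma mul_tpow_coeff' (x : PS) (e g : ℝ) :
    (x * PS.tpow e).coeff (OrderDual.toDual g) = x.coeff (OrderDual.toDual (g - e)) := by
  have := mul_tpow_coeff x e (g - e)
  rwa [sub_add_cancel] at this

lemma cast_sum {n : ℕ} (m : Fin n → ℕ) (y : Fin n → ℝ) :
    ∑ k, m k • ((y k : WithBot ℝ)) = ((∑ k, m k • y k : ℝ) : WithBot ℝ) := by
  push_cast
  rfl

lemma sum_coeff {ι : Type*} (s : Finset ι) (f : ι → PS) (g : ℝᵒᵈ) :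
    (∑ i ∈ s, f i).coeff g = ∑ i ∈ s, (f i).coeff g :=
  map_sum (HahnSeries.coeff.addMonoidHom g) f s

lemma PS.order_eq (x : PS) : x.order = OrderDual.toDual (PS.valR x) := rfl

/-- coefficient of `x * tpow e` vanishes above the exponent `valR x + e`. -/
lemma coeff_mul_tpow_eq_zero (x : PS) (e g : ℝ) (h : PS.valR x + e < g) :
    (x * PS.tpow e).coeff (OrderDual.toDual g) = 0 := by
  by_cases hx : x = 0
  · simp [hx]
  · rw [mul_tpow_coeff']
    apply HahnSeries.coeff_eq_zero_of_lt_order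
    rw [PS.order_eq]
    exact OrderDual.toDual_lt_toDual.mpr (by linarith)

lemma coeff_mul_tpow_top (x : PS) (e : ℝ) :
    (x * PS.tpow e).coeff (OrderDual.toDual (PS.valR x + e)) = PS.lc x := by
  rw [mul_tpow_coeff']
  simp only [add_sub_cancel_right]
  rfl

/-- Conversely: let `P = P⁺ - P⁻` be a polynomial over the Puiseux
series, `p⁺, p⁻` the associated tropical polynomials, and `y ∈ ℝⁿ` a point with
`p⁺(y) > p⁻(y)`.  Then the monomial lift `x` with `x_k = t^{y_k}` satisfies `P(x) > 0`. -/
theorem PS.eval_pos_of_trop_gt {n N : ℕ} (c : Fin N → PS) (α : Fin N → Fin n → ℕ)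
    (y : Fin n → ℝ)
    (hy : tropMinus c α (fun k => (y k : WithBot ℝ)) <
          tropPlus c α (fun k => (y k : WithBot ℝ))) :
    PS.lt 0 (Pplus c α (fun k => PS.tpow (y k)) - Pminus c α (fun k => PS.tpow (y k))) := by
  classical
  set Sp := Finset.univ.filter (fun i => PS.Pos (c i)) with hSp
  set Sm := Finset.univ.filter (fun i => PS.Pos (-(c i))) with hSm
  set E : Fin N → ℝ := fun i => ∑ k, α i k • y k with hE
  -- monomial computation
  have hmono : ∀ i, (∏ k, PS.tpow (y k) ^ α i k) = PS.tpow (E i) := by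
    intro i
    rw [hE]
    simp_rw [tpow_pow]
    exact prod_tpow _ _
  -- rewrite tropical polynomials
  have hcast : ∀ i, (PS.valR (c i) : WithBot ℝ) + ∑ k, α i k • ((y k : WithBot ℝ))
      = ((PS.valR (c i) + E i : ℝ) : WithBot ℝ) := by
    intro i; rw [cast_sum, ← WithBot.coe_add]
  have hcastm : ∀ i, (PS.valR (-(c i)) : WithBot ℝ) + ∑ k, α i k • ((y k : WithBot ℝ))
      = ((PS.valR (c i) + E i : ℝ) : WithBot ℝ) := by
    intro i
    have : PS.valR (-(c i)) = PS.valR (c i) := by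
      unfold PS.valR; rw [HahnSeries.order_neg]
    rw [this, cast_sum, ← WithBot.coe_add]
  -- Sp is nonempty
  have hne : Sp.Nonempty := by
    by_contra h
    rw [Finset.not_nonempty_iff_eq_empty] at h
    have : tropPlus c α (fun k => (y k : WithBot ℝ)) = ⊥ := by
      unfold tropPlus; rw [← hSp, h]; simp
    rw [this] at hy
    exact not_lt_bot hy
  set d : ℝ := Sp.sup' hne (fun i => PS.valR (c i) + E i) with hd
  have htropP : tropPlus c α (fun k => (y k : WithBot ℝ)) = (d : WithBot ℝ) := by
    unfold tropPlus
    rw [← hSp, hd, Finset.coe_sup' hne]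
    exact Finset.sup_congr rfl (fun i _ => (hcast i).symm) |>.symm
  -- bounds
  have hSpLe : ∀ i ∈ Sp, PS.valR (c i) + E i ≤ d := fun i hi => Finset.le_sup' (fun i => PS.valR (c i) + E i) hi
  have hSmLt : ∀ i ∈ Sm, PS.valR (c i) + E i < d := by
    intro i hi
    have h1 : ((PS.valR (c i) + E i : ℝ) : WithBot ℝ)
        ≤ tropMinus c α (fun k => (y k : WithBot ℝ)) := by
      have htropM : tropMinus c α (fun k => (y k : WithBot ℝ))
          = Sm.sup (fun i => ((PS.valR (c i) + E i : ℝ) : WithBot ℝ)) := by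
        unfold tropMinus; rw [← hSm]; exact Finset.sup_congr rfl (fun j _ => hcastm j)
      rw [htropM]
      exact Finset.le_sup (f := fun j => ((PS.valR (c j) + E j : ℝ) : WithBot ℝ)) hi
    have := lt_of_le_of_lt h1 (hy.trans_le htropP.le)
    exact_mod_cast this
  -- nonzeroness of coefficients in Sp
  have hcne : ∀ i ∈ Sp, c i ≠ 0 := by
    intro i hi h0
    have := (Finset.mem_filter.mp hi).2
    rw [h0] at this
    simp [PS.Pos, PS.lc] at this
  -- the evaluation as a sum over Sp ∪ Sm
  set X : PS := Pplus c α (fun k => PS.tpow (y k)) - Pminus c α (fun k => PS.tpow (y k)) with hX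
  have hXeq : X = (∑ i ∈ Sp, c i * PS.tpow (E i)) + ∑ i ∈ Sm, c i * PS.tpow (E i) := by
    rw [hX]
    unfold Pplus Pminus
    rw [← hSp, ← hSm, sub_eq_add_neg, ← Finset.sum_neg_distrib]
    congr 1
    · exact Finset.sum_congr rfl fun i _ => by rw [hmono]
    · exact Finset.sum_congr rfl fun i _ => by rw [hmono]; ring
  have hXcoeff : ∀ g : ℝ, X.coeff (OrderDual.toDual g)
      = (∑ i ∈ Sp, (c i * PS.tpow (E i)).coeff (OrderDual.toDual g))
        + ∑ i ∈ Sm, (c i * PS.tpow (E i)).coeff (OrderDual.toDual g) := by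
    intro g
    rw [hXeq, HahnSeries.coeff_add, sum_coeff, sum_coeff]
  -- vanishing above d
  have hzero : ∀ g : ℝ, d < g → X.coeff (OrderDual.toDual g) = 0 := by
    intro g hg
    rw [hXcoeff]
    rw [Finset.sum_eq_zero, Finset.sum_eq_zero, add_zero]
    · exact fun i hi => coeff_mul_tpow_eq_zero _ _ _ ((hSmLt i hi).trans hg)
    · exact fun i hi => coeff_mul_tpow_eq_zero _ _ _ (lt_of_le_of_lt (hSpLe i hi) hg)
  -- positivity at d
  have hpos : 0 < X.coeff (OrderDual.toDual d) := by
    rw [hXcoeff]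
    have hm0 : ∑ i ∈ Sm, (c i * PS.tpow (E i)).coeff (OrderDual.toDual d) = 0 :=
      Finset.sum_eq_zero fun i hi => coeff_mul_tpow_eq_zero _ _ _ (hSmLt i hi)
    rw [hm0, add_zero]
    obtain ⟨i₀, hi₀, hdi₀⟩ := Finset.exists_mem_eq_sup' hne (fun i => PS.valR (c i) + E i)
    apply Finset.sum_pos'
    · intro i hi
      rcases lt_or_eq_of_le (hSpLe i hi) with h | h
      · rw [coeff_mul_tpow_eq_zero _ _ _ h]
      · rw [← h, coeff_mul_tpow_top]
        exact le_of_lt (Finset.mem_filter.mp hi).2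
    · refine ⟨i₀, hi₀, ?_⟩
      rw [← hd] at hdi₀
      rw [hdi₀, coeff_mul_tpow_top]
      exact (Finset.mem_filter.mp hi₀).2
  -- X ≠ 0 and its order is toDual d
  have hX0 : X ≠ 0 := fun h => by rw [h] at hpos; simp at hpos
  have horder : X.order = OrderDual.toDual d := by
    have hle : X.order ≤ OrderDual.toDual d :=
      HahnSeries.order_le_of_coeff_ne_zero (ne_of_gt hpos)
    rcases lt_or_eq_of_le hle with h | h
    · exfalso
      have hgt : d < OrderDual.ofDual X.order := h
      have := hzero (OrderDual.ofDual X.order) hgt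
      exact hX0 (HahnSeries.coeff_order_eq_zero.mp this)
    · exact h
  -- conclude
  show PS.Pos (X - 0)
  rw [sub_zero]
  unfold PS.Pos PS.lc
  rw [horder]
  exact hpos
end
end
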